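/- For every integer m ≥ 1, every subgroup of order 3 of the automorphism group of N = Z/2^m Z × Z/2^m Z is conjugate in Aut(N) to the subgroup generated by the automorphism γ of N defined by γ(a,b) = (b, -(a+b)). -/

import Mathlib

/-- The automorphism γ of `ZMod (2^m) × ZMod (2^m)` sending `(a, b)` to `(b, -(a+b))`. -/
def pyrGamma (m : ℕ) : AddAut (ZMod (2 ^ m) × ZMod (2 ^ m)) where
  toFun p := (p.2, -(p.1 + p.2))
  invFun p := (-(p.1 + p.2), p.1)
  left_inv p := by
    obtain ⟨a, b⟩ := p
    simp only [Prod.mk.injEq]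
    constructor <;> first | trivial | ring
  right_inv p := by
    obtain ⟨a, b⟩ := p
    simp only [Prod.mk.injEq]
    constructor <;> first | trivial | ring
  map_add' p q := by
    simp only [Prod.fst_add, Prod.snd_add, Prod.mk.injEq, Prod.mk_add_mk]
    constructor <;> first | trivial | ring

/-- γ as a multiplicative automorphism of the corresponding multiplicative group. -/
def pyrGammaMul (m : ℕ) : MulAut (Multiplicative (ZMod (2 ^ m) × ZMod (2 ^ m))) :=
  AddEquiv.toMultiplicative (pyrGamma m)

section
variable {m : ℕ}

lemma my_two_tors (hm : 1 ≤ m) (a : ZMod (2^m)) (h : a + a = 0) :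
    a = 0 ∨ a = (2^(m-1) : ℕ) := by
  haveI : NeZero (2^m) := ⟨pow_ne_zero m two_ne_zero⟩
  have hv : ((a.val : ℕ) : ZMod (2^m)) = a := ZMod.natCast_rightInverse a
  have h2 : ((2 * a.val : ℕ) : ZMod (2^m)) = 0 := by
    push_cast
    rw [hv, two_mul]; exact h
  rw [ZMod.natCast_eq_zero_iff] at h2
  have hm' : 2^m = 2 * 2^(m-1) := by
    rw [mul_comm, ← pow_succ]
    congr 1
    omega
  have hdvd : 2^(m-1) ∣ a.val := by
    rcases h2 with ⟨c, hc⟩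
    have : 2 * a.val = 2 * (2^(m-1) * c) := by rw [hc, hm']; ring
    exact ⟨c, Nat.eq_of_mul_eq_mul_left (by norm_num) this⟩
  have hlt : a.val < 2^m := ZMod.val_lt a
  rcases hdvd with ⟨c, hc⟩
  have : c < 2 := by
    by_contra hh
    have : 2^(m-1) * 2 ≤ 2^(m-1) * c := Nat.mul_le_mul_left _ (by omega)
    omega
  interval_cases c
  · left; rw [← hv]; simp [hc]
  · right; rw [← hv]; simp [hc, Nat.mul_comm]
end

section
variable {m : ℕ}

lemma my_c_ne (hm : 1 ≤ m) : ((2^(m-1) : ℕ) : ZMod (2^m)) ≠ 0 := by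
  haveI : NeZero (2^m) := ⟨pow_ne_zero m two_ne_zero⟩
  rw [Ne, ZMod.natCast_eq_zero_iff]
  intro ⟨c, hc⟩
  have hm' : 2 ^ m = 2 * 2 ^ (m - 1) := by
    rw [mul_comm, ← pow_succ]
    congr 1
    omega
  have hpos : 0 < 2^(m-1) := Nat.pow_pos (by norm_num)
  rw [hm'] at hc
  rcases Nat.eq_zero_or_pos c with h0 | h1
  · simp [h0] at hc
  · have : 2 * 2^(m-1) * 1 ≤ 2 * 2^(m-1) * c := Nat.mul_le_mul_left _ h1
    omega

lemma my_c_add (hm : 1 ≤ m) : ((2^(m-1) : ℕ) : ZMod (2^m)) + ((2^(m-1) : ℕ) : ZMod (2^m)) = 0 := by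
  rw [← Nat.cast_add]
  have : 2^(m-1) + 2^(m-1) = 2^m := by
    rw [← two_mul, mul_comm, ← pow_succ]
    congr 1
    omega
  rw [this, ZMod.natCast_self]

lemma my_even (hm : 1 ≤ m) (a : ZMod (2^m))
    (h : (ZMod.castHom (dvd_pow_self 2 (by omega : m ≠ 0)) (ZMod 2)) a = 0) :
    ∃ b, a = 2 * b := by
  haveI : NeZero (2^m) := ⟨pow_ne_zero m two_ne_zero⟩
  have hv : ((a.val : ℕ) : ZMod (2^m)) = a := ZMod.natCast_rightInverse a
  rw [← hv, map_natCast, ZMod.natCast_eq_zero_iff] at h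
  rcases h with ⟨k, hk⟩
  exact ⟨(k : ZMod (2^m)), by rw [← hv, hk]; push_cast; ring⟩

lemma my_unit (hm : 1 ≤ m) (a : ZMod (2^m))
    (h : (ZMod.castHom (dvd_pow_self 2 (by omega : m ≠ 0)) (ZMod 2)) a ≠ 0) :
    ∃ w, a * w = 1 := by
  haveI : NeZero (2^m) := ⟨pow_ne_zero m two_ne_zero⟩
  have hv : ((a.val : ℕ) : ZMod (2^m)) = a := ZMod.natCast_rightInverse a
  rw [← hv, map_natCast, Ne, ZMod.natCast_eq_zero_iff] at h
  have hco : Nat.Coprime a.val (2^m) := by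
    apply Nat.Coprime.pow_right
    rw [Nat.coprime_two_right]
    rcases Nat.even_or_odd a.val with he | ho
    · exact absurd he.two_dvd h
    · exact ho
  have := (ZMod.isUnit_iff_coprime a.val (2^m)).mpr hco
  rw [hv] at this
  rcases this with ⟨u, hu⟩
  exact ⟨(u⁻¹ : (ZMod (2^m))ˣ), by rw [← hu]; simp⟩
end

section
variable {m : ℕ}
local notation "Nn" => (ZMod (2^m) × ZMod (2^m))

lemma my_tors_pair (hm : 1 ≤ m) (x : Nn) (h : x + x = 0) :
    x = 0 ∨ x = (((2^(m-1) : ℕ) : ZMod (2^m)), 0) ∨ x = (0, ((2^(m-1) : ℕ) : ZMod (2^m)))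
      ∨ x = (((2^(m-1) : ℕ) : ZMod (2^m)), ((2^(m-1) : ℕ) : ZMod (2^m))) := by
  obtain ⟨a, b⟩ := x
  rw [Prod.mk_add_mk, Prod.mk_eq_zero] at h
  rcases my_two_tors hm a h.1 with h1 | h1 <;> rcases my_two_tors hm b h.2 with h2 | h2 <;>
    subst h1 <;> subst h2 <;> simp

lemma my_fix2 (hm : 1 ≤ m) (g : AddAut Nn) (hg3 : 3 • g = 0)
    (v : Nn) (hv : v ≠ 0) (h2v : v + v = 0) (hgv : g v = v) :
    ∀ x, x + x = 0 → g x = x := by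
  have hg3' : ∀ x : Nn, g (g (g x)) = x := by
    intro x
    have := congrArg (fun e : AddAut Nn => e x) hg3
    simpa [succ_nsmul, AddAut.add_apply] using this
  intro x hx
  by_cases hx0 : x = 0
  · simp [hx0]
  by_cases hxv : x = v
  · rw [hxv]; exact hgv
  -- g x is nonzero 2-torsion, ≠ v
  have hgx_t : g x + g x = 0 := by rw [← map_add, hx, map_zero]
  have hgx_0 : g x ≠ 0 := fun h => hx0 (g.injective (by rw [h, map_zero]))
  have hgx_v : g x ≠ v := fun h => hxv (g.injective (by rw [h, hgv]))
  -- claim: g x = x ∨ g x = v + x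
  have key : g x = x ∨ g x = v + x := by
    rcases my_tors_pair hm v h2v with h | h | h | h <;>
      rcases my_tors_pair hm x hx with h' | h' | h' | h' <;>
        rcases my_tors_pair hm (g x) hgx_t with h'' | h'' | h'' | h'' <;>
          subst h <;> subst h' <;>
          first
            | (exact absurd h'' hgx_0)
            | (exact absurd h'' hgx_v)
            | (exact absurd rfl hv)
            | (exact absurd rfl hx0)
            | (exact absurd rfl hxv)
            | (left; exact h'')
            | (right; rw [h'', Prod.mk_add_mk, my_c_add hm]; simp)
            | (right; rw [h'', Prod.mk_add_mk]; simp)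
  rcases key with h | h
  · exact h
  · exfalso
    have h2 : g (g x) = x := by
      rw [h, map_add, hgv, h, ← add_assoc, h2v, zero_add]
    have h3 := hg3' x
    rw [h2] at h3
    rw [h] at h3
    apply hv
    have := congrArg (fun y => y - x) h3
    simpa using this

lemma my_lift (hm : 1 ≤ m) (g : AddAut Nn) (hg3 : 3 • g = 0)
    (H2 : ∀ x, x + x = 0 → g x = x) : g = 0 := by
  have hg3' : ∀ x : Nn, g (g (g x)) = x := by
    intro x
    have := congrArg (fun e : AddAut Nn => e x) hg3
    simpa [succ_nsmul, AddAut.add_apply] using this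
  have key : ∀ (k : ℕ) (x : Nn), 2^k • x = 0 → g x = x := by
    intro k
    induction k with
    | zero => intro x hx; simp only [pow_zero, one_smul] at hx; simp [hx]
    | succ k ih =>
      intro x hx
      have e : 2^k + 2^k = 2^(k+1) := by rw [pow_succ]; omega
      have hxx : g (x + x) = x + x := by
        apply ih
        rw [smul_add, ← add_nsmul, e]
        exact hx
      have hy : (g x - x) + (g x - x) = 0 := by
        have : g x + g x = x + x := by rw [← map_add, hxx]
        abel_nf
        rw [show (2:ℤ) • g x = g x + g x by abel, this]
        abel
      have hgy : g (g x - x) = g x - x := H2 _ hy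
      have h2 : g (g x) = x := by
        have hrep : g x = x + (g x - x) := by abel
        conv_lhs => rw [hrep]
        rw [map_add, hgy]
        have : g x + (g x - x) = x + ((g x - x) + (g x - x)) := by abel
        rw [this, hy, add_zero]
      have h3 := hg3' x
      rw [h2] at h3
      exact h3
  have hall : ∀ x : Nn, (2^m : ℕ) • x = 0 := by
    intro x
    obtain ⟨a, b⟩ := x
    rw [Prod.smul_mk, Prod.mk_eq_zero]
    constructor <;> rw [nsmul_eq_mul, ZMod.natCast_self, zero_mul]
  exact AddEquiv.ext fun x => (key m x (hall x)).trans (rfl : (0 : AddAut Nn) x = x).symm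

lemma my_nofix (hm : 1 ≤ m) (g : AddAut Nn) (hg3 : 3 • g = 0) (hg1 : g ≠ 0) :
    ∀ v : Nn, g v = v → v = 0 := by
  have key : ∀ (k : ℕ) (v : Nn), 2^k • v = 0 → g v = v → v = 0 := by
    intro k
    induction k with
    | zero => intro v hv _; simpa using hv
    | succ k ih =>
      intro v hv hgv
      have e : 2^k + 2^k = 2^(k+1) := by rw [pow_succ]; omega
      have h2v : v + v = 0 := by
        apply ih
        · rw [smul_add, ← add_nsmul, e]; exact hv
        · rw [map_add, hgv]
      by_contra hv0
      exact hg1 (my_lift hm g hg3 (my_fix2 hm g hg3 v hv0 h2v hgv))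
  intro v hgv
  apply key m v _ hgv
  obtain ⟨a, b⟩ := v
  rw [Prod.smul_mk, Prod.mk_eq_zero]
  constructor <;> rw [nsmul_eq_mul, ZMod.natCast_self, zero_mul]

lemma my_h0 (hm : 1 ≤ m) (g : AddAut Nn) (hg3 : 3 • g = 0) (hg1 : g ≠ 0) :
    ∀ x : Nn, g (g x) + g x + x = 0 := by
  have hg3' : ∀ x : Nn, g (g (g x)) = x := by
    intro x
    have := congrArg (fun e : AddAut Nn => e x) hg3
    simpa [succ_nsmul, AddAut.add_apply] using this
  intro x
  apply my_nofix hm g hg3 hg1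
  rw [map_add, map_add, hg3']
  abel

end

theorem stmt_16 (m : ℕ) (hm : 1 ≤ m)
    (A : AddSubgroup (AddAut (ZMod (2 ^ m) × ZMod (2 ^ m)))) (hA : Nat.card A = 3) :
    ∃ σ : AddAut (ZMod (2 ^ m) × ZMod (2 ^ m)),
      A.map (AddAut.addConj σ).toAddMonoidHom = AddSubgroup.zmultiples (pyrGamma m) := by
  haveI : NeZero (2^m) := ⟨pow_ne_zero m two_ne_zero⟩
  haveI hfin : Finite A := Nat.finite_of_card_ne_zero (by rw [hA]; omega)
  obtain ⟨g, hgA, hg1⟩ : ∃ g ∈ A, g ≠ 0 := by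
    by_contra h
    push_neg at h
    have hbot : A = ⊥ := (AddSubgroup.eq_bot_iff_forall A).mpr h
    rw [hbot, AddSubgroup.card_bot] at hA
    omega
  have hg3 : 3 • g = 0 := by
    have h1 : (3 : ℕ) • (⟨g, hgA⟩ : A) = 0 := by rw [← hA]; exact card_nsmul_eq_zero'
    have h2 := congrArg (AddSubgroup.subtype A) h1
    simpa using h2
  have hnofix := my_nofix hm g hg3 hg1
  have hh0 := my_h0 hm g hg3 hg1
  set x₀ : ZMod (2^m) × ZMod (2^m) := (1, 0) with hx₀
  set u : ZMod (2^m) × ZMod (2^m) := g x₀ with hu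
  have hgu : g u = -(u + x₀) := by
    have h := hh0 x₀
    rw [add_assoc] at h
    exact eq_neg_of_add_eq_zero_left h
  set φ := ZMod.castHom (dvd_pow_self 2 (by omega : m ≠ 0)) (ZMod 2) with hφ
  have hz2 : ∀ x : ZMod 2, x = 0 ∨ x = 1 := by decide
  have hodd : φ u.2 ≠ 0 := by
    intro h2
    obtain ⟨b2, hb2⟩ := my_even hm u.2 h2
    by_cases h1 : φ u.1 = 0
    · obtain ⟨b1, hb1⟩ := my_even hm u.1 h1
      have hueq : u = (b1, b2) + (b1, b2) := by
        apply Prod.ext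
        · rw [hb1]; simp [two_mul]
        · rw [hb2]; simp [two_mul]
      have hkey : x₀ = g.symm ((b1, b2)) + g.symm ((b1, b2)) := by
        rw [← map_add, ← hueq, hu, AddEquiv.symm_apply_apply]
      have h1' := congrArg (fun p : ZMod (2^m) × ZMod (2^m) => φ p.1) hkey
      simp only [Prod.fst_add, Prod.fst_zero, map_add, hx₀, map_one, map_zero] at h1'
      rcases hz2 (φ (g.symm (b1, b2)).1) with h | h <;> rw [h] at h1' <;>
        revert h1' <;> decide
    · -- u.1 odd, u.2 even
      have hy1 : φ (u.1 - 1) = 0 := by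
        rcases hz2 (φ u.1) with h | h
        · exact absurd h h1
        · rw [map_sub, h, map_one, sub_self]
      obtain ⟨c1, hc1⟩ := my_even hm (u.1 - 1) hy1
      set z : ZMod (2^m) × ZMod (2^m) := (c1, b2) with hzdef
      have hyz : u - x₀ = z + z := by
        apply Prod.ext
        · show u.1 - 1 = c1 + c1
          rw [hc1, two_mul]
        · show u.2 - 0 = b2 + b2
          rw [sub_zero, hb2, two_mul]
      have E : g (z + z) + (z + z) + (z + z) + (x₀ + x₀ + x₀) = 0 := by
        rw [← hyz, map_sub, hgu, ← hu]
        abel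
      rw [map_add g z z] at E
      have h1' := congrArg (fun p : ZMod (2^m) × ZMod (2^m) => φ p.1) E
      simp only [Prod.fst_add, Prod.fst_zero, map_add, hx₀, map_one, map_zero] at h1'
      rcases hz2 (φ (g z).1) with h | h <;> rcases hz2 (φ z.1) with h' | h' <;>
        rw [h, h'] at h1' <;> revert h1' <;> decide
  obtain ⟨w, hw⟩ := my_unit hm u.2 hodd
  set σ₀ : AddAut (ZMod (2^m) × ZMod (2^m)) :=
    { toFun := fun p => (p.1 - p.2 * u.1, -(p.2 * u.2))
      invFun := fun p => (p.1 - p.2 * w * u.1, -(p.2 * w))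
      left_inv := by
        intro ⟨a, b⟩
        apply Prod.ext
        · show (a - b * u.1) - (-(b * u.2)) * w * u.1 = a
          linear_combination (b * u.1) * hw
        · show -((-(b * u.2)) * w) = b
          linear_combination (b : ZMod (2^m)) * hw
      right_inv := by
        intro ⟨a, b⟩
        apply Prod.ext
        · show (a - b * w * u.1) - (-(b * w)) * u.1 = a
          ring
        · show -((-(b * w)) * u.2) = b
          linear_combination (b : ZMod (2^m)) * hw
      map_add' := by
        intro p q
        apply Prod.ext
        · show (p.1 + q.1) - (p.2 + q.2) * u.1 = (p.1 - p.2 * u.1) + (q.1 - q.2 * u.1)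
          ring
        · show -((p.2 + q.2) * u.2) = -(p.2 * u.2) + -(q.2 * u.2)
          ring } with hσ₀
  have hval : ∀ c : ZMod (2^m), ((c.val : ℕ) : ZMod (2^m)) = c := fun c => ZMod.natCast_rightInverse c
  have hlin : ∀ (c : ZMod (2^m)) (p : ZMod (2^m) × ZMod (2^m)), g (c • p) = c • g p := by
    intro c p
    have h1 : ∀ q : ZMod (2^m) × ZMod (2^m), c • q = (c.val : ℕ) • q := by
      intro ⟨q1, q2⟩
      apply Prod.ext
      · show c * q1 = (c.val : ℕ) • q1
        rw [nsmul_eq_mul, hval]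
      · show c * q2 = (c.val : ℕ) • q2
        rw [nsmul_eq_mul, hval]
    rw [h1, map_nsmul, h1]
  have hsmul : ∀ (c : ZMod (2^m)) (p : ZMod (2^m) × ZMod (2^m)), c • p = (c * p.1, c * p.2) := by
    intro c ⟨p1, p2⟩
    rfl
  have hcomm : ∀ p : ZMod (2^m) × ZMod (2^m), σ₀ (pyrGamma m p) = g (σ₀ p) := by
    intro ⟨a, b⟩
    have h1 : σ₀ (a, b) = a • x₀ + (-b) • u := by
      rw [hsmul, hsmul, hx₀]
      show ((a - b * u.1, -(b * u.2)) : ZMod (2^m) × ZMod (2^m)) = _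
      apply Prod.ext
      · show a - b * u.1 = a * 1 + (-b) * u.1
        ring
      · show -(b * u.2) = a * 0 + (-b) * u.2
        ring
    have h2 : pyrGamma m (a, b) = (b, -(a+b)) := rfl
    rw [h2, h1, map_add, hlin, hlin, ← hu, hgu]
    show ((b - (-(a+b)) * u.1, -((-(a+b)) * u.2)) : ZMod (2^m) × ZMod (2^m)) = _
    rw [hsmul a u, hsmul (-b)]
    apply Prod.ext
    · show b - (-(a+b)) * u.1 = a * u.1 + (-b) * (-(u.1 + x₀.1))
      rw [hx₀]
      show b - (-(a+b)) * u.1 = a * u.1 + (-b) * (-(u.1 + 1))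
      ring
    · show -((-(a+b)) * u.2) = a * u.2 + (-b) * (-(u.2 + x₀.2))
      rw [hx₀]
      show -((-(a+b)) * u.2) = a * u.2 + (-b) * (-(u.2 + 0))
      ring
  have hconj : (AddAut.addConj (-σ₀)) g = pyrGamma m := by
    apply AddEquiv.ext
    intro p
    have h1 : (AddAut.addConj (-σ₀)) g = -σ₀ + g + σ₀ := by
      rw [AddAut.addConj_apply, neg_neg]
    rw [h1]
    show (-σ₀) (g (σ₀ p)) = pyrGamma m p
    rw [← hcomm p]
    show σ₀.symm (σ₀ (pyrGamma m p)) = pyrGamma m p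
    exact σ₀.symm_apply_apply _
  refine ⟨-σ₀, ?_⟩
  have hzA : AddSubgroup.zmultiples g = A := by
    have hle : AddSubgroup.zmultiples g ≤ A := AddSubgroup.zmultiples_le.mpr hgA
    refine AddSubgroup.eq_of_le_of_card_ge hle ?_
    rw [hA, Nat.card_zmultiples]
    have hdvd : addOrderOf g ∣ 3 := addOrderOf_dvd_of_nsmul_eq_zero hg3
    rcases (Nat.prime_three.eq_one_or_self_of_dvd _ hdvd) with h | h
    · exact absurd (AddMonoid.addOrderOf_eq_one_iff.mp h) hg1
    · rw [h]
  rw [← hzA, AddMonoidHom.map_zmultiples]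
  congr 1
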